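/- Let H be a Polish metric space with distance d, (Ω, F, P) a probability space, and for each t ≥ 0 let σ_t : Ω → Ω be a measurable measure-preserving map. Let g : Ω × H → H be jointly measurable and such that x ↦ g(ω, x) is continuous for every ω. Let u_t, v_t : Ω → H (t ≥ 0) be measurable. Assume: (i) for every ε > 0 there exist a compact set K ⊆ H and t_ε ≥ 0 such that for all t ≥ t_ε, P( u_t ∈ K and v_t ∈ K ) ≥ 1 − ε; (ii) d(u_t, v_t) → 0 in probability as t → ∞. Then d( g(σ_t ω, u_t(ω)), g(σ_t ω, v_t(ω)) ) → 0 in probability as t → ∞. -/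

import Mathlib

open MeasureTheory Filter
open scoped ENNReal

/-- Let `H` be a Polish metric space, `(Ω, F, P)` a probability space, and for `t ≥ 0`
let `σ t : Ω → Ω` be measure-preserving. Let `g : Ω × H → H` be jointly measurable
with `x ↦ g ω x` continuous for each `ω`, and `u t, v t : Ω → H` measurable.
Assume (i) tightness: for every `ε > 0` there are a compact `K ⊆ H` and `t_ε` with
`P(u t ∈ K and v t ∈ K) ≥ 1 − ε` for `t ≥ t_ε`; (ii) `dist (u t) (v t) → 0` in
probability as `t → ∞`. Then `dist (g (σ t ω) (u t ω)) (g (σ t ω) (v t ω)) → 0`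
in probability as `t → ∞`. -/
theorem stmt_9 {Ω : Type*} [MeasurableSpace Ω] (P : Measure Ω) [IsProbabilityMeasure P]
    {H : Type*} [MetricSpace H] [PolishSpace H] [MeasurableSpace H] [BorelSpace H]
    (σ : ℝ → Ω → Ω) (hσ : ∀ t : ℝ, 0 ≤ t → MeasurePreserving (σ t) P P)
    (g : Ω → H → H)
    (hg_meas : Measurable (fun p : Ω × H => g p.1 p.2))
    (hg_cont : ∀ ω, Continuous (g ω))
    (u v : ℝ → Ω → H)
    (hu_meas : ∀ t : ℝ, 0 ≤ t → Measurable (u t))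
    (hv_meas : ∀ t : ℝ, 0 ≤ t → Measurable (v t))
    (htight : ∀ ε : ℝ, 0 < ε → ∃ K : Set H, IsCompact K ∧ ∃ tε : ℝ, 0 ≤ tε ∧
      ∀ t : ℝ, tε ≤ t → 1 - ENNReal.ofReal ε ≤ P {ω | u t ω ∈ K ∧ v t ω ∈ K})
    (hconv : ∀ δ : ℝ, 0 < δ →
      Tendsto (fun t : ℝ => P {ω | δ ≤ dist (u t ω) (v t ω)}) atTop (nhds 0)) :
    ∀ δ : ℝ, 0 < δ →
      Tendsto (fun t : ℝ =>
        P {ω | δ ≤ dist (g (σ t ω) (u t ω)) (g (σ t ω) (v t ω))}) atTop (nhds 0) := by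
  intro δ hδ
  rw [ENNReal.tendsto_nhds_zero]
  intro ε hε
  -- choose a real `r > 0` with `3 * ofReal r ≤ ε`
  have hε3 : (0 : ℝ≥0∞) < ε / 3 := ENNReal.div_pos hε.ne' (by norm_num)
  obtain ⟨r, -, hr1, hr2⟩ := ENNReal.lt_iff_exists_real_btwn.mp hε3
  have hr0 : 0 < r := ENNReal.ofReal_pos.mp hr1
  have hrε : ENNReal.ofReal r + ENNReal.ofReal r + ENNReal.ofReal r ≤ ε := by
    calc ENNReal.ofReal r + ENNReal.ofReal r + ENNReal.ofReal r
        = 3 * ENNReal.ofReal r := by ring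
      _ ≤ 3 * (ε / 3) := mul_le_mul_right hr2.le 3
      _ = ε := ENNReal.mul_div_cancel (by norm_num) (by norm_num)
  -- tightness
  obtain ⟨K, hK, tε, htε0, hKb⟩ := htight r hr0
  -- the bad sets for the (uniform) continuity of `g ω` on `K`
  set C : ℕ → Set (H × H) :=
    fun n => {p | p.1 ∈ K ∧ p.2 ∈ K ∧ dist p.1 p.2 ≤ 1 / ((n : ℝ) + 1)} with hC
  set A : ℕ → Set Ω :=
    fun n => {ω | ∃ p ∈ C n, δ ≤ dist (g ω p.1) (g ω p.2)} with hA
  have hCc : ∀ n, IsCompact (C n) := by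
    intro n
    have : C n = (K ×ˢ K) ∩ {p : H × H | dist p.1 p.2 ≤ 1 / ((n : ℝ) + 1)} := by
      ext p; simp [hC, Set.mem_prod, and_assoc]
    rw [this]
    exact (hK.prod hK).inter_right
      (isClosed_le (continuous_fst.dist continuous_snd) continuous_const)
  have hAm : ∀ n, MeasurableSet (A n) := by
    intro n
    obtain ⟨s, hsc, hsd⟩ := TopologicalSpace.exists_countable_dense ↥(C n)
    haveI := hsc.to_subtype
    have hmω : ∀ p : H × H, Measurable fun ω => dist (g ω p.1) (g ω p.2) := fun p =>
      (hg_meas.comp (measurable_id.prodMk measurable_const)).dist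
        (hg_meas.comp (measurable_id.prodMk measurable_const))
    have hF : Measurable fun ω =>
        ⨆ q : s, ENNReal.ofReal (dist (g ω (q : H × H).1) (g ω (q : H × H).2)) :=
      Measurable.iSup fun q => ENNReal.measurable_ofReal.comp (hmω _)
    have hset : A n = {ω | ENNReal.ofReal δ ≤
        ⨆ q : s, ENNReal.ofReal (dist (g ω (q : H × H).1) (g ω (q : H × H).2))} := by
      ext ω
      constructor
      · rintro ⟨p, hp, hpd⟩
        have hpc : p ∈ closure (Subtype.val '' s) :=
          map_mem_closure continuous_subtype_val (hsd ⟨p, hp⟩) (Set.mapsTo_image _ _)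
        have hcl : IsClosed {q : H × H | ENNReal.ofReal (dist (g ω q.1) (g ω q.2)) ≤
            ⨆ q : s, ENNReal.ofReal (dist (g ω (q : H × H).1) (g ω (q : H × H).2))} :=
          isClosed_le (ENNReal.continuous_ofReal.comp
            (((hg_cont ω).comp continuous_fst).dist ((hg_cont ω).comp continuous_snd)))
            continuous_const
        have hsub : Subtype.val '' s ⊆ {q : H × H |
            ENNReal.ofReal (dist (g ω q.1) (g ω q.2)) ≤
            ⨆ q : s, ENNReal.ofReal (dist (g ω (q : H × H).1) (g ω (q : H × H).2))} := by
          rintro q ⟨q', hq', rfl⟩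
          exact le_iSup (fun q : s =>
            ENNReal.ofReal (dist (g ω (q : H × H).1) (g ω (q : H × H).2))) ⟨q', hq'⟩
        have := hcl.closure_subset_iff.mpr hsub hpc
        exact le_trans (ENNReal.ofReal_le_ofReal hpd) this
      · intro hle
        simp only [Set.mem_setOf_eq] at hle
        rcases isEmpty_or_nonempty s with hs | hs
        · rw [iSup_of_empty] at hle
          exact absurd (le_bot_iff.mp hle) (ENNReal.ofReal_pos.mpr hδ).ne'
        · obtain ⟨q0⟩ := hs
          have hCne : (C n).Nonempty := ⟨q0.1.1, q0.1.2⟩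
          obtain ⟨p₀, hp₀, hmax⟩ := (hCc n).exists_isMaxOn hCne
            (((hg_cont ω).comp continuous_fst).dist
              ((hg_cont ω).comp continuous_snd)).continuousOn
          have hsup : (⨆ q : s,
              ENNReal.ofReal (dist (g ω (q : H × H).1) (g ω (q : H × H).2))) ≤
              ENNReal.ofReal (dist (g ω p₀.1) (g ω p₀.2)) :=
            iSup_le fun q => ENNReal.ofReal_le_ofReal (hmax q.1.2)
          exact ⟨p₀, hp₀,
            (ENNReal.ofReal_le_ofReal_iff dist_nonneg).mp (hle.trans hsup)⟩
    rw [hset]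
    exact measurableSet_le measurable_const hF
  -- `A` is antitone with empty intersection
  have hAanti : Antitone A := by
    intro m n hmn ω hω
    obtain ⟨p, hp, hpd⟩ := hω
    refine ⟨p, ⟨hp.1, hp.2.1, hp.2.2.trans ?_⟩, hpd⟩
    apply one_div_le_one_div_of_le (by positivity)
    exact_mod_cast add_le_add_left (Nat.cast_le.mpr hmn) 1
  have hAint : (⋂ n, A n) = ∅ := by
    rw [Set.eq_empty_iff_forall_notMem]
    intro ω hω
    have hUC : UniformContinuousOn (g ω) K :=
      hK.uniformContinuousOn_of_continuous (hg_cont ω).continuousOn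
    rw [Metric.uniformContinuousOn_iff] at hUC
    obtain ⟨η, hη, hηd⟩ := hUC δ hδ
    obtain ⟨n, hn⟩ := exists_nat_one_div_lt hη
    obtain ⟨p, hp, hpd⟩ := Set.mem_iInter.mp hω n
    exact absurd (hηd p.1 hp.1 p.2 hp.2.1 (lt_of_le_of_lt hp.2.2 hn)) (not_lt.mpr hpd)
  -- choose `N` with `P (A N) ≤ ofReal r`
  have htend : Tendsto (P ∘ A) atTop (nhds 0) := by
    have := tendsto_measure_iInter_atTop (μ := P)
      (fun n => (hAm n).nullMeasurableSet) hAanti ⟨0, measure_ne_top _ _⟩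
    rwa [hAint, measure_empty] at this
  obtain ⟨N, hN⟩ := (htend.eventually_le_const hr1).exists
  -- choose `T` so that the middle set is small for `t ≥ T`
  have hmidtend := ENNReal.tendsto_nhds_zero.mp
    (hconv (1 / ((N : ℝ) + 1)) (by positivity)) (ENNReal.ofReal r) hr1
  obtain ⟨T, hT⟩ := eventually_atTop.mp hmidtend
  filter_upwards [eventually_ge_atTop (max tε T)] with t ht
  have httε : tε ≤ t := le_trans (le_max_left _ _) ht
  have ht0 : 0 ≤ t := le_trans htε0 httε
  -- the inclusion into three small sets
  have hsub : {ω | δ ≤ dist (g (σ t ω) (u t ω)) (g (σ t ω) (v t ω))} ⊆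
      ((σ t ⁻¹' A N ∪ {ω | 1 / ((N : ℝ) + 1) ≤ dist (u t ω) (v t ω)}) ∪
        {ω | u t ω ∈ K ∧ v t ω ∈ K}ᶜ) := by
    intro ω hω
    by_cases h3 : u t ω ∈ K ∧ v t ω ∈ K
    · by_cases h2 : 1 / ((N : ℝ) + 1) ≤ dist (u t ω) (v t ω)
      · exact Or.inl (Or.inr h2)
      · exact Or.inl (Or.inl ⟨(u t ω, v t ω), ⟨h3.1, h3.2, (not_le.mp h2).le⟩, hω⟩)
    · exact Or.inr h3
  -- the three bounds
  have h1 : P (σ t ⁻¹' A N) ≤ ENNReal.ofReal r := by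
    rw [(hσ t ht0).measure_preimage (hAm N).nullMeasurableSet]; exact hN
  have h2 : P {ω | 1 / ((N : ℝ) + 1) ≤ dist (u t ω) (v t ω)} ≤ ENNReal.ofReal r :=
    hT t (le_trans (le_max_right _ _) ht)
  have h3 : P ({ω | u t ω ∈ K ∧ v t ω ∈ K}ᶜ) ≤ ENNReal.ofReal r := by
    have hgm : MeasurableSet {ω | u t ω ∈ K ∧ v t ω ∈ K} :=
      ((hu_meas t ht0) hK.isClosed.measurableSet).inter
        ((hv_meas t ht0) hK.isClosed.measurableSet)
    rw [measure_compl hgm (measure_ne_top _ _), measure_univ]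
    calc (1 : ℝ≥0∞) - P {ω | u t ω ∈ K ∧ v t ω ∈ K}
        ≤ 1 - (1 - ENNReal.ofReal r) := tsub_le_tsub_left (hKb t httε) 1
      _ ≤ ENNReal.ofReal r := tsub_tsub_le
  calc P {ω | δ ≤ dist (g (σ t ω) (u t ω)) (g (σ t ω) (v t ω))}
      ≤ P ((σ t ⁻¹' A N ∪ {ω | 1 / ((N : ℝ) + 1) ≤ dist (u t ω) (v t ω)}) ∪
        {ω | u t ω ∈ K ∧ v t ω ∈ K}ᶜ) := measure_mono hsub
    _ ≤ P (σ t ⁻¹' A N ∪ {ω | 1 / ((N : ℝ) + 1) ≤ dist (u t ω) (v t ω)}) +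
        P ({ω | u t ω ∈ K ∧ v t ω ∈ K}ᶜ) := measure_union_le _ _
    _ ≤ (P (σ t ⁻¹' A N) + P {ω | 1 / ((N : ℝ) + 1) ≤ dist (u t ω) (v t ω)}) +
        P ({ω | u t ω ∈ K ∧ v t ω ∈ K}ᶜ) := add_le_add_left (measure_union_le _ _) _
    _ ≤ ENNReal.ofReal r + ENNReal.ofReal r + ENNReal.ofReal r :=
        add_le_add (add_le_add h1 h2) h3
    _ ≤ ε := hrε
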